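/- arXiv:2506.13435 — 5 statements merged into one kernel-verified Lean document; each statement's English description precedes it below -/
import Mathlib

section
/- If h : [0,1] → ℝ is concave on [0,1), increasing, with h(0)=0 and h(1)=1, and h is nonnegative, then h can be written as h = λ·h̃ + (1-λ)·δ for some λ ∈ [0,1], where h̃ is concave on all of [0,1] with h̃(0)=0, h̃(1)=1, increasing, and δ(t) = 1 if t = 1 and 0 otherwise. -/
/-!
Let `L` be the supremum of `h` on `[0, 1)`. Redefining `h 1 := L` keeps `h` concave: for `x < 1`
the concavity inequality against the endpoint is the limit of the inequalities against points
`y ↑ 1`, and monotonicity lets us pass to the supremum. So `h` is this concave function plus a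
jump of size `1 - L` at `1`, and `h̃` is the concave function rescaled by `L` (any concave `h̃`
works if `L = 0`, since then `h = δ`).
-/

open Set Function

section ExtendBySup

variable {f : ℝ → ℝ} {a b L : ℝ}

theorem ConcaveOn.mul_add_mul_le_of_isLUB_Ico (hconc : ConcaveOn ℝ (Ico a b) f)
    (hmono : MonotoneOn f (Ico a b)) (hL : IsLUB (f '' Ico a b) L) {x : ℝ} (hx : x ∈ Ico a b)
    {α β : ℝ} (hα : 0 < α) (hβ : 0 < β) (hαβ : α + β = 1) :
    α * f x + β * L ≤ f (α * x + β * b) := by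
  have hz : α * x + β * b ∈ Ico a b := by
    obtain rfl : β = 1 - α := by linarith
    constructor <;> nlinarith [mul_lt_mul_of_pos_left hx.2 hα, hx.1]
  suffices L ≤ (f (α * x + β * b) - α * f x) / β by
    rw [le_div_iff₀ hβ] at this
    linarith
  refine hL.2 ?_
  rintro _ ⟨y, hy, rfl⟩
  have hconc_xy : α * f x + β * f y ≤ f (α * x + β * y) := hconc.2 hx hy hα.le hβ.le hαβ
  have hmono_xy : f (α * x + β * y) ≤ f (α * x + β * b) :=
    hmono (hconc.1 hx hy hα.le hβ.le hαβ) hz (by simp only [smul_eq_mul]; nlinarith [hy.2])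
  rw [le_div_iff₀ hβ]
  linarith

theorem ConcaveOn.update_Icc_of_isLUB (hconc : ConcaveOn ℝ (Ico a b) f)
    (hmono : MonotoneOn f (Ico a b)) (hL : IsLUB (f '' Ico a b) L) :
    ConcaveOn ℝ (Icc a b) (update f b L) := by
  refine LinearOrder.concaveOn_of_lt (convex_Icc a b) ?_
  intro x hx y hy hxy α β hα hβ hαβ
  have hxb : x ≠ b := (hxy.trans_le hy.2).ne
  have hx' : x ∈ Ico a b := ⟨hx.1, lt_of_le_of_ne hx.2 hxb⟩
  simp only [smul_eq_mul]
  rcases eq_or_ne y b with rfl | hyb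
  · have hzb : α * x + β * y ≠ y := fun heq =>
      (mul_pos hα (sub_pos.2 hxy)).ne' (by linear_combination -heq + y * hαβ)
    rw [update_of_ne hxb, update_self, update_of_ne hzb]
    exact hconc.mul_add_mul_le_of_isLUB_Ico hmono hL hx' hα hβ hαβ
  · have hy' : y ∈ Ico a b := ⟨hy.1, lt_of_le_of_ne hy.2 hyb⟩
    have hz : α * x + β * y ∈ Ico a b := hconc.1 hx' hy' hα.le hβ.le hαβ
    rw [update_of_ne hxb, update_of_ne hyb, update_of_ne hz.2.ne]
    exact hconc.2 hx' hy' hα.le hβ.le hαβ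

theorem MonotoneOn.update_Icc_of_isLUB (hmono : MonotoneOn f (Ico a b))
    (hL : IsLUB (f '' Ico a b) L) : MonotoneOn (update f b L) (Icc a b) := by
  intro x hx y hy hxy
  rcases eq_or_ne y b with rfl | hyb
  · rcases eq_or_ne x y with rfl | hxy'
    · exact le_rfl
    · rw [update_of_ne hxy', update_self]
      exact hL.1 ⟨x, ⟨hx.1, lt_of_le_of_ne hx.2 hxy'⟩, rfl⟩
  · have hxb : x ≠ b := fun hxb => hyb (le_antisymm hy.2 (hxb ▸ hxy))
    rw [update_of_ne hxb, update_of_ne hyb]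
    exact hmono ⟨hx.1, lt_of_le_of_ne hx.2 hxb⟩ ⟨hy.1, lt_of_le_of_ne hy.2 hyb⟩ hxy

end ExtendBySup

theorem stmt_0_general (h : ℝ → ℝ)
    (hconc : ConcaveOn ℝ (Set.Ico (0:ℝ) 1) h)
    (hmono : MonotoneOn h (Set.Icc (0:ℝ) 1))
    (h0 : h 0 = 0) (h1 : h 1 = 1) :
    ∃ l ∈ Set.Icc (0:ℝ) 1, ∃ htil : ℝ → ℝ,
      ConcaveOn ℝ (Set.Icc (0:ℝ) 1) htil ∧
      MonotoneOn htil (Set.Icc (0:ℝ) 1) ∧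
      htil 0 = 0 ∧ htil 1 = 1 ∧
      ∀ t ∈ Set.Icc (0:ℝ) 1,
        h t = l * htil t + (1 - l) * (if t = 1 then 1 else 0) := by
  have hIco_Icc : Ico (0:ℝ) 1 ⊆ Icc 0 1 := Ico_subset_Icc_self
  have hub : 1 ∈ upperBounds (h '' Ico 0 1) := by
    rintro _ ⟨t, ht, rfl⟩
    exact h1 ▸ hmono (hIco_Icc ht) (by norm_num) ht.2.le
  set L := sSup (h '' Ico 0 1)
  have hL : IsLUB (h '' Ico 0 1) L := isLUB_csSup ⟨h 0, 0, by norm_num, rfl⟩ ⟨1, hub⟩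
  have hL0 : 0 ≤ L := h0 ▸ hL.1 ⟨0, by norm_num, rfl⟩
  have hL1 : L ≤ 1 := hL.2 hub
  rcases hL0.eq_or_lt with hLzero | hLpos
  · refine ⟨0, by norm_num, id, concaveOn_id (convex_Icc 0 1), monotoneOn_id, rfl, rfl, ?_⟩
    intro t ht
    rcases eq_or_ne t 1 with rfl | ht1
    · simp [h1]
    · have hle : h t ≤ L := hL.1 ⟨t, ⟨ht.1, lt_of_le_of_ne ht.2 ht1⟩, rfl⟩
      have hge : h 0 ≤ h t := hmono (by norm_num) ht ht.1
      simp only [ht1, if_false]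
      linarith
  · have hg_conc := hconc.update_Icc_of_isLUB (hmono.mono hIco_Icc) hL
    have hg_mono := (hmono.mono hIco_Icc).update_Icc_of_isLUB hL
    refine ⟨L, ⟨hL0, hL1⟩, fun t => L⁻¹ * update h 1 L t, hg_conc.smul (inv_nonneg.2 hL0),
      fun x hx y hy hxy => mul_le_mul_of_nonneg_left (hg_mono hx hy hxy) (inv_nonneg.2 hL0),
      by simp [h0], by simp [hLpos.ne'], ?_⟩
    intro t ht
    rcases eq_or_ne t 1 with rfl | ht1
    · simp [h1, hLpos.ne']
    · simp [ht1, hLpos.ne']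

theorem stmt_0 (h : ℝ → ℝ)
    (hconc : ConcaveOn ℝ (Set.Ico (0:ℝ) 1) h)
    (hmono : MonotoneOn h (Set.Icc (0:ℝ) 1))
    (h0 : h 0 = 0) (h1 : h 1 = 1)
    (hnonneg : ∀ t ∈ Set.Icc (0:ℝ) 1, 0 ≤ h t) :
    ∃ l ∈ Set.Icc (0:ℝ) 1, ∃ htil : ℝ → ℝ,
      ConcaveOn ℝ (Set.Icc (0:ℝ) 1) htil ∧
      MonotoneOn htil (Set.Icc (0:ℝ) 1) ∧
      htil 0 = 0 ∧ htil 1 = 1 ∧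
      ∀ t ∈ Set.Icc (0:ℝ) 1,
        h t = l * htil t + (1 - l) * (if t = 1 then 1 else 0) :=
  stmt_0_general h hconc hmono h0 h1
end

section
/- Let g : [0,1]^s → ℝ. If g is componentwise concave and submodular, then for all x₁, x₂, x₃, x₄ ∈ [0,1]^s with x₁ ≤ x₂ ≤ x₄, x₁ ≤ x₃ ≤ x₄ (componentwise order), and x₁ + x₄ = x₂ + x₃, one has g(x₁) + g(x₄) ≤ g(x₂) + g(x₃). -/
open Set Function

/-!
Write `x₂ = x₁ + h` and `x₃ = x₁ + k` with `h, k ≥ 0`: the claim is that the increment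
`g (a + h) - g a` does not grow when `a` moves up by `k`. For `h = t • eᵢ` this follows by adding
submodularity, applied to `x₁ + t • eᵢ` and the point `y` that equals `x₁` in coordinate `i` and
`x₁ + k` elsewhere, to concavity of `g` along coordinate `i` through `y`. The property is stable
under sums of nonnegative increments, and every `h ≥ 0` is the sum of the `h i • eᵢ`.
-/

theorem ConcaveOn.add_le_add_of_le {s : Set ℝ} {f : ℝ → ℝ} (hf : ConcaveOn ℝ s f) {a b δ : ℝ}
    (hab : a ≤ b) (hδ : 0 ≤ δ) (ha : a ∈ s) (hbδ : b + δ ∈ s) :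
    f a + f (b + δ) ≤ f (a + δ) + f b := by
  rcases (show a ≤ b + δ by linarith).eq_or_lt with h | h
  · obtain ⟨rfl, rfl⟩ : b = a ∧ δ = 0 := by constructor <;> linarith
    simp
  have hL : b + δ - a ≠ 0 := (sub_pos.2 h).ne'
  have hμ : 0 ≤ (b - a) / (b + δ - a) := div_nonneg (sub_nonneg.2 hab) (sub_pos.2 h).le
  have hν : 0 ≤ δ / (b + δ - a) := div_nonneg hδ (sub_pos.2 h).le
  have hsum : (b - a) / (b + δ - a) + δ / (b + δ - a) = 1 := by field_simp; ring
  have h₁ := hf.2 ha hbδ hμ hν hsum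
  have h₂ := hf.2 ha hbδ hν hμ (by rw [add_comm, hsum])
  have e₁ : ((b - a) / (b + δ - a)) • a + (δ / (b + δ - a)) • (b + δ) = a + δ := by
    simp only [smul_eq_mul]; field_simp; ring
  have e₂ : (δ / (b + δ - a)) • a + ((b - a) / (b + δ - a)) • (b + δ) = b := by
    simp only [smul_eq_mul]; field_simp; ring
  rw [e₁, smul_eq_mul, smul_eq_mul] at h₁
  rw [e₂, smul_eq_mul, smul_eq_mul] at h₂
  linear_combination h₁ + h₂ - (f a + f (b + δ)) * hsum

section DiminishingIncrement

variable {ι : Type*} {g : (ι → ℝ) → ℝ}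

def HasDiminishingIncrement (g : (ι → ℝ) → ℝ) (h : ι → ℝ) : Prop :=
  ∀ a k : ι → ℝ, 0 ≤ a → 0 ≤ k → a + h + k ≤ 1 → g a + g (a + h + k) ≤ g (a + h) + g (a + k)

theorem hasDiminishingIncrement_zero : HasDiminishingIncrement g 0 :=
  fun _ _ _ _ _ => by simp

theorem HasDiminishingIncrement.add {h₁ h₂ : ι → ℝ} (H₁ : HasDiminishingIncrement g h₁)
    (H₂ : HasDiminishingIncrement g h₂) (hh₁ : 0 ≤ h₁) (hh₂ : 0 ≤ h₂) :
    HasDiminishingIncrement g (h₁ + h₂) := by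
  intro a k ha hk hle
  rw [← add_assoc] at hle ⊢
  have along₁ := H₁ a k ha hk ((add_le_add_left (le_add_of_nonneg_right hh₂) k).trans hle)
  have along₂ := H₂ (a + h₁) k (add_nonneg ha hh₁) hk hle
  linarith

variable [DecidableEq ι]

theorem hasDiminishingIncrement_single (i : ι)
    (hcc : ∀ x ∈ Icc (0 : ι → ℝ) 1, ConcaveOn ℝ (Icc 0 1) (fun t => g (update x i t)))
    (hsub : ∀ x ∈ Icc (0 : ι → ℝ) 1, ∀ y ∈ Icc (0 : ι → ℝ) 1, g (x ⊓ y) + g (x ⊔ y) ≤ g x + g y)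
    {t : ℝ} (ht : 0 ≤ t) : HasDiminishingIncrement g (Pi.single i t) := by
  intro x k hx hk hle
  have hxj (j : ι) : 0 ≤ x j := hx j
  have hkj (j : ι) : 0 ≤ k j := hk j
  have hsj (j : ι) : 0 ≤ (Pi.single i t : ι → ℝ) j :=
    (Pi.single_nonneg.2 ht : (0 : ι → ℝ) ≤ Pi.single i t) j
  have hlej (j : ι) : x j + (Pi.single i t : ι → ℝ) j + k j ≤ 1 := hle j
  have hlei : x i + t + k i ≤ 1 := by simpa using hlej i
  set y := update (x + k) i (x i)
  have hy : y ∈ Icc 0 1 := by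
    constructor <;> intro j <;> rcases eq_or_ne j i with rfl | hj <;>
      simp [y, *] <;> linarith [hxj j, hkj j, hsj j, hlej j]
  have hu : x + Pi.single i t ∈ Icc 0 1 :=
    ⟨fun j => by simp only [Pi.add_apply, Pi.zero_apply]; linarith [hxj j, hsj j],
      fun j => by simp only [Pi.add_apply, Pi.one_apply]; linarith [hkj j, hlej j]⟩
  have hinf : (x + Pi.single i t) ⊓ y = x := by
    ext j; rcases eq_or_ne j i with rfl | hj <;> simp [y, *]
  have hsup : (x + Pi.single i t) ⊔ y = update y i (x i + t) := by
    ext j; rcases eq_or_ne j i with rfl | hj <;> simp [y, *]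
  have hbase : update y i (x i) = y := by simp [y]
  have hleft : update y i (x i + t + k i) = x + Pi.single i t + k := by
    ext j; rcases eq_or_ne j i with rfl | hj <;> simp [y, *]
  have hright : update y i (x i + k i) = x + k := by
    ext j; rcases eq_or_ne j i with rfl | hj <;> simp [y, *]
  have hconc := (hcc y hy).add_le_add_of_le (le_add_of_nonneg_right ht) (hkj i)
    ⟨hxj i, by linarith [hkj i]⟩ ⟨by linarith [hxj i, hkj i], hlei⟩
  rw [hbase, hleft, hright, ← hsup] at hconc
  have hsubmod := hsub _ hu y hy
  rw [hinf] at hsubmod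
  linarith

theorem hasDiminishingIncrement_of_nonneg [Fintype ι]
    (hcc : ∀ i, ∀ x ∈ Icc (0 : ι → ℝ) 1, ConcaveOn ℝ (Icc 0 1) (fun t => g (update x i t)))
    (hsub : ∀ x ∈ Icc (0 : ι → ℝ) 1, ∀ y ∈ Icc (0 : ι → ℝ) 1, g (x ⊓ y) + g (x ⊔ y) ≤ g x + g y)
    {h : ι → ℝ} (hh : 0 ≤ h) : HasDiminishingIncrement g h := by
  have key := Finset.sum_induction (s := Finset.univ) (fun i => Pi.single i (h i))
    (fun v => 0 ≤ v ∧ HasDiminishingIncrement g v)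
    (fun _ _ H₁ H₂ => ⟨add_nonneg H₁.1 H₂.1, H₁.2.add H₂.2 H₁.1 H₂.1⟩)
    ⟨le_rfl, hasDiminishingIncrement_zero⟩
    (fun i _ => ⟨Pi.single_nonneg.2 (hh i), hasDiminishingIncrement_single i (hcc i) hsub (hh i)⟩)
  rw [Finset.univ_sum_single] at key
  exact key.2

end DiminishingIncrement

theorem stmt_1 (s : ℕ) (g : (Fin s → ℝ) → ℝ)
    (hcc : ∀ i : Fin s, ∀ x ∈ Set.Icc (0 : Fin s → ℝ) 1,
      ConcaveOn ℝ (Set.Icc (0:ℝ) 1) (fun t => g (Function.update x i t)))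
    (hsub : ∀ x ∈ Set.Icc (0 : Fin s → ℝ) 1, ∀ y ∈ Set.Icc (0 : Fin s → ℝ) 1,
      g (x ⊓ y) + g (x ⊔ y) ≤ g x + g y) :
    ∀ x₁ ∈ Set.Icc (0 : Fin s → ℝ) 1, ∀ x₂ ∈ Set.Icc (0 : Fin s → ℝ) 1,
    ∀ x₃ ∈ Set.Icc (0 : Fin s → ℝ) 1, ∀ x₄ ∈ Set.Icc (0 : Fin s → ℝ) 1,
      x₁ ≤ x₂ → x₂ ≤ x₄ → x₁ ≤ x₃ → x₃ ≤ x₄ → x₁ + x₄ = x₂ + x₃ →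
      g x₁ + g x₄ ≤ g x₂ + g x₃ := by
  intro x₁ hx₁ x₂ _ x₃ _ x₄ hx₄ h₁₂ _ h₁₃ _ hsum
  have hx₄_eq : x₄ = x₁ + (x₂ - x₁) + (x₃ - x₁) := by
    rw [← sub_eq_zero, ← sub_eq_zero.2 hsum]; abel
  have key := hasDiminishingIncrement_of_nonneg hcc hsub (sub_nonneg.2 h₁₂) x₁ (x₃ - x₁) hx₁.1
    (sub_nonneg.2 h₁₃) (hx₄_eq ▸ hx₄.2)
  rwa [← hx₄_eq, add_sub_cancel, add_sub_cancel] at key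
end

section
/- Let g : [0,1]^s → ℝ be upper semi-continuous, and suppose that for all x ∈ [0,1]^s, all ε, δ ≥ 0 and indices i, j with x − ε·eᵢ ∈ [0,1]^s and x + ε·eᵢ + δ·eⱼ ∈ [0,1]^s, one has g(x − ε·eᵢ) + g(x + ε·eᵢ + δ·eⱼ) ≤ g(x) + g(x + δ·eⱼ). Then g satisfies: g(x) + g(x + ε·eᵢ + δ·eⱼ) ≤ g(x + ε·eᵢ) + g(x + δ·eⱼ) whenever x, x + ε·eᵢ + δ·eⱼ ∈ [0,1]^s. -/
/-!
Restrict `g` to the segments `t ↦ x + t • eᵢ` and `t ↦ x + t • eᵢ + δ • eⱼ`, `t ∈ [0, ε]`, calling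
the restrictions `φ` and `ψ`; the hypothesis reads `φ (t - c) + ψ (t + c) ≤ φ t + ψ t`. With
`c = ε / (n + 1)` it says that `k ↦ ψ ((k + 1) c) - φ (k c)` is nonincreasing, so
`ψ ε - φ (ε - c) ≤ ψ c - φ 0`. As `n → ∞`, upper semicontinuity of `φ` at `ε` and of `ψ` at `0`
turns this into `ψ ε - φ ε ≤ ψ 0 - φ 0`, which is the claim.
-/

open Set

/-- The `i`-th standard unit vector in `ℝ^s`. -/
def unitVec (s : ℕ) (i : Fin s) : Fin s → ℝ := Pi.single i 1

open Filter Topology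

section OneDimensional

variable {φ ψ : ℝ → ℝ}

theorem sub_le_sub_of_forall_sub_add_le {c : ℝ} (hc : 0 ≤ c) (n : ℕ)
    (h : ∀ t, c ≤ t → t + c ≤ (n + 1) * c → φ (t - c) + ψ (t + c) ≤ φ t + ψ t) :
    ψ ((n + 1) * c) - φ (n * c) ≤ ψ c - φ 0 := by
  induction n with
  | zero => simp
  | succ n ih =>
    have hstep := h ((n + 1) * c) (by nlinarith) (by push_cast; linarith)
    have hprev := ih fun t ht htc => h t ht (by push_cast; linarith)
    rw [show (n + 1) * c - c = n * c by ring, show (n + 1) * c + c = (n + 1 + 1) * c by ring]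
      at hstep
    push_cast
    linarith

theorem add_le_add_of_forall_sub_add_le {ε : ℝ} (hε : 0 ≤ ε)
    (h : ∀ t c, 0 ≤ c → c ≤ t → t + c ≤ ε → φ (t - c) + ψ (t + c) ≤ φ t + ψ t)
    (hφ : UpperSemicontinuousWithinAt φ (Icc 0 ε) ε)
    (hψ : UpperSemicontinuousWithinAt ψ (Icc 0 ε) 0) :
    φ 0 + ψ ε ≤ φ ε + ψ 0 := by
  set c : ℕ → ℝ := fun n => ε / (n + 1)
  have hc_mem (n : ℕ) : c n ∈ Icc 0 ε :=
    ⟨by positivity, div_le_self hε (by linarith [n.cast_nonneg (α := ℝ)])⟩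
  have hc : Tendsto c atTop (𝓝[Icc 0 ε] 0) := by
    refine tendsto_nhdsWithin_iff.2 ⟨?_, Eventually.of_forall hc_mem⟩
    simpa [c, div_eq_mul_inv] using tendsto_one_div_add_atTop_nhds_zero_nat.const_mul ε
  have hc' : Tendsto (fun n => ε - c n) atTop (𝓝[Icc 0 ε] ε) := by
    refine tendsto_nhdsWithin_iff.2 ⟨?_, Eventually.of_forall fun n => ?_⟩
    · simpa using (tendsto_nhdsWithin_iff.1 hc).1.const_sub ε
    · exact ⟨by linarith [(hc_mem n).2], by linarith [(hc_mem n).1]⟩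
  have key (n : ℕ) : φ 0 + ψ ε ≤ φ (ε - c n) + ψ (c n) := by
    have hnc : (n + 1) * c n = ε := by simp only [c]; field_simp
    have := sub_le_sub_of_forall_sub_add_le (hc_mem n).1 n fun t ht htc =>
      h t (c n) (hc_mem n).1 ht (hnc ▸ htc)
    rw [hnc, show n * c n = ε - c n by linarith] at this
    linarith
  refine le_of_forall_pos_lt_add fun η hη => ?_
  obtain ⟨n, hφn, hψn⟩ := ((hc'.eventually (hφ _ (lt_add_of_pos_right _ (half_pos hη)))).and
    (hc.eventually (hψ _ (lt_add_of_pos_right _ (half_pos hη))))).exists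
  linarith [key n]

end OneDimensional

section LineRestriction

variable {E : Type*} [AddCommGroup E] [Module ℝ E] [TopologicalSpace E] [ContinuousAdd E]
  [ContinuousSMul ℝ E] {K : Set E} {g : E → ℝ} {x u v : E} {ε δ : ℝ}

theorem add_le_add_of_forall_sub_smul_add_le (hε : 0 ≤ ε)
    (hK : ∀ t ∈ Icc 0 ε, x + t • u ∈ K ∧ x + t • u + δ • v ∈ K)
    (hu : UpperSemicontinuousWithinAt g K (x + ε • u))
    (hv : UpperSemicontinuousWithinAt g K (x + δ • v))
    (hg : ∀ (y : E) (c : ℝ), 0 ≤ c → y - c • u ∈ K → y + c • u + δ • v ∈ K →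
      g (y - c • u) + g (y + c • u + δ • v) ≤ g y + g (y + δ • v)) :
    g x + g (x + ε • u + δ • v) ≤ g (x + ε • u) + g (x + δ • v) := by
  have hφ : UpperSemicontinuousWithinAt (fun t => g (x + t • u)) (Icc 0 ε) ε :=
    UpperSemicontinuousWithinAt.comp (g := fun t : ℝ => x + t • u) hu
      (by fun_prop : Continuous _).continuousWithinAt fun t ht => (hK t ht).1
  have hψ : UpperSemicontinuousWithinAt (fun t => g (x + t • u + δ • v)) (Icc 0 ε) 0 :=
    UpperSemicontinuousWithinAt.comp (g := fun t : ℝ => x + t • u + δ • v) (by simpa using hv)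
      (by fun_prop : Continuous _).continuousWithinAt fun t ht => (hK t ht).2
  have := add_le_add_of_forall_sub_add_le hε ?_ hφ hψ
  · simpa using this
  · intro t c hc hct htc
    have e1 : x + t • u - c • u = x + (t - c) • u := by module
    have e2 : x + t • u + c • u + δ • v = x + (t + c) • u + δ • v := by module
    have := hg (x + t • u) c hc (e1 ▸ (hK (t - c) ⟨by linarith, by linarith⟩).1)
      (e2 ▸ (hK (t + c) ⟨by linarith, by linarith⟩).2)
    rwa [e1, e2] at this

end LineRestriction

theorem add_smul_add_smul_mem_Icc {E : Type*} [AddCommGroup E] [PartialOrder E]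
    [IsOrderedAddMonoid E] [Module ℝ E] [PosSMulMono ℝ E] {x u v : E} {ε δ t r : ℝ}
    (hu : 0 ≤ u) (hv : 0 ≤ v) (ht : t ∈ Icc 0 ε) (hr : r ∈ Icc 0 δ) :
    x + t • u + r • v ∈ Icc x (x + ε • u + δ • v) :=
  ⟨by
    rw [add_assoc]
    exact le_add_of_nonneg_right (add_nonneg (smul_nonneg ht.1 hu) (smul_nonneg hr.1 hv)),
    add_le_add (add_le_add_right (smul_le_smul_of_nonneg_right ht.2 hu) x)
      (smul_le_smul_of_nonneg_right hr.2 hv)⟩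

theorem unitVec_nonneg (s : ℕ) (i : Fin s) : 0 ≤ unitVec s i :=
  Pi.single_nonneg.2 zero_le_one

theorem stmt_3 (s : ℕ) (g : (Fin s → ℝ) → ℝ)
    (husc : ∀ x ∈ Set.Icc (0 : Fin s → ℝ) 1,
      UpperSemicontinuousWithinAt g (Set.Icc (0 : Fin s → ℝ) 1) x)
    (hineq : ∀ x : Fin s → ℝ, ∀ ε δ : ℝ, 0 ≤ ε → 0 ≤ δ → ∀ i j : Fin s,
        x - ε • unitVec s i ∈ Set.Icc (0 : Fin s → ℝ) 1 →
        x + ε • unitVec s i + δ • unitVec s j ∈ Set.Icc (0 : Fin s → ℝ) 1 →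
        g (x - ε • unitVec s i) + g (x + ε • unitVec s i + δ • unitVec s j) ≤
          g x + g (x + δ • unitVec s j)) :
    ∀ x ∈ Set.Icc (0 : Fin s → ℝ) 1, ∀ ε δ : ℝ, 0 ≤ ε → 0 ≤ δ → ∀ i j : Fin s,
      x + ε • unitVec s i + δ • unitVec s j ∈ Set.Icc (0 : Fin s → ℝ) 1 →
      g x + g (x + ε • unitVec s i + δ • unitVec s j) ≤
        g (x + ε • unitVec s i) + g (x + δ • unitVec s j) := by
  intro x hx ε δ hε hδ i j hmem
  have hK : ∀ t ∈ Icc 0 ε, ∀ r ∈ Icc 0 δ,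
      x + t • unitVec s i + r • unitVec s j ∈ Icc (0 : Fin s → ℝ) 1 := fun t ht r hr =>
    Icc_subset_Icc hx.1 hmem.2 <|
      add_smul_add_smul_mem_Icc (unitVec_nonneg s i) (unitVec_nonneg s j) ht hr
  have hK₀ : ∀ t ∈ Icc 0 ε, x + t • unitVec s i ∈ Icc (0 : Fin s → ℝ) 1 := fun t ht => by
    simpa using hK t ht 0 (left_mem_Icc.2 hδ)
  refine add_le_add_of_forall_sub_smul_add_le hε
    (fun t ht => ⟨hK₀ t ht, hK t ht δ (right_mem_Icc.2 hδ)⟩) (husc _ (hK₀ ε (right_mem_Icc.2 hε)))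
    (husc _ ?_) fun y c hc => hineq y c δ hc hδ i j
  simpa using hK 0 (left_mem_Icc.2 hε) δ (right_mem_Icc.2 hδ)
end

section
/- Let ρ₁, ρ₂ : L → ℝ be two functionals on a space L of random variables taking values in [0,1], each satisfying ρ(λX + a) = λρ(X) + a for all λ > 0, a ∈ ℝ with λX + a ∈ L, and ρ(c) = c for all constants c ∈ [0,1]. Let f : [0,1] → {1,…,n} be increasing with f(0)=1, f(1)=n, and f not constant on (0,1). If f(ρ₁(X)) = f(ρ₂(X)) for all X ∈ L, then ρ₁ = ρ₂. -/
open Set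

/-- Near a jump of a monotone ℕ-valued function, we can find arbitrarily close
points with different values. -/
lemma find_close (f : ℝ → ℕ) (hf : MonotoneOn f (Set.Icc (0:ℝ) 1))
    (u v : ℝ) (hu : 0 < u) (hv : v < 1) (huv : u < v) (hu1 : u ≤ 1) (hv0 : 0 ≤ v)
    (hne : f u ≠ f v) (δ : ℝ) (hδ : 0 < δ) :
    ∃ x y, x ∈ Set.Icc u v ∧ y ∈ Set.Icc u v ∧ x < y ∧ y - x < δ ∧ f x ≠ f y := by
  set S : Set ℝ := {z | z ∈ Set.Icc u v ∧ f z = f u} with hS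
  have hSne : S.Nonempty := ⟨u, ⟨le_refl u, le_of_lt huv⟩, rfl⟩
  have hSbdd : BddAbove S := ⟨v, fun z hz => hz.1.2⟩
  set c := sSup S with hc
  have hcv : c ≤ v := csSup_le hSne (fun z hz => hz.1.2)
  have huc : u ≤ c := le_csSup hSbdd ⟨⟨le_refl u, le_of_lt huv⟩, rfl⟩
  -- pick x ∈ S with x > c - δ/2
  obtain ⟨x, hxS, hxgt⟩ : ∃ x ∈ S, c - δ/2 < x := by
    rcases exists_lt_of_lt_csSup hSne (show c - δ/2 < c by linarith) with ⟨x, hxS, hx⟩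
    exact ⟨x, hxS, hx⟩
  set y := min v (c + δ/2) with hy
  have hyv : y ≤ v := min_le_left _ _
  have hyc : c ≤ y := le_min hcv (by linarith)
  have hyu : u ≤ y := le_trans huc hyc
  have hxc : x ≤ c := le_csSup hSbdd hxS
  have hxIcc : x ∈ Set.Icc u v := hxS.1
  have hfx : f x = f u := hxS.2
  have hyS : y ∉ S := by
    intro hyS
    rcases le_or_gt y c with h | h
    · -- then y = c; y = min v (c+δ/2) ≤ c means v ≤ c or c+δ/2 ≤ c
      have hyeq : y = c := le_antisymm h hyc
      -- c ∈ S with f c = f u; but then c < v would contradict? We need only: if y ∈ S then f y = f u.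
      -- case split: y = v or y < v
      rcases eq_or_lt_of_le hyv with hveq | hvlt
      · exact hne (hveq ▸ hyS.2.symm)
      · -- y < v and y = c; but y = min v (c+δ/2) < v means y = c + δ/2 > c, contradiction
        have : y = c + δ/2 := by
          rcases min_cases v (c + δ/2) with ⟨h1, h2⟩ | ⟨h1, h2⟩
          · exact absurd (hy ▸ h1) (ne_of_lt hvlt)
          · exact hy ▸ h1
        linarith [hyeq ▸ this]
    · exact absurd (le_csSup hSbdd hyS) (not_le.mpr h)
  have hfy : f y ≠ f u := by
    intro h
    exact hyS ⟨⟨hyu, hyv⟩, h⟩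
  have hxy : x ≠ y := fun h => hfy (h ▸ hfx)
  have hxly : x < y := lt_of_le_of_ne (le_trans hxc hyc) hxy
  refine ⟨x, y, hxIcc, ⟨hyu, hyv⟩, hxly, ?_, fun h => hfy (h ▸ hfx)⟩
  have : y ≤ c + δ/2 := min_le_right _ _
  linarith

lemma stmt_8_aux {Ω : Type*} (L : Set (Ω → ℝ))
    (hLval : ∀ X ∈ L, ∀ ω, X ω ∈ Set.Icc (0:ℝ) 1)
    (hLaff : ∀ X ∈ L, ∀ l : ℝ, 0 < l → ∀ a : ℝ,
      (∀ ω, l * X ω + a ∈ Set.Icc (0:ℝ) 1) → (fun ω => l * X ω + a) ∈ L)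
    (ρ₁ ρ₂ : (Ω → ℝ) → ℝ)
    (hρ₁val : ∀ X ∈ L, ρ₁ X ∈ Set.Icc (0:ℝ) 1)
    (hρ₂val : ∀ X ∈ L, ρ₂ X ∈ Set.Icc (0:ℝ) 1)
    (hρ₁aff : ∀ X ∈ L, ∀ l : ℝ, 0 < l → ∀ a : ℝ, (fun ω => l * X ω + a) ∈ L →
      ρ₁ (fun ω => l * X ω + a) = l * ρ₁ X + a)
    (hρ₂aff : ∀ X ∈ L, ∀ l : ℝ, 0 < l → ∀ a : ℝ, (fun ω => l * X ω + a) ∈ L →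
      ρ₂ (fun ω => l * X ω + a) = l * ρ₂ X + a)
    (f : ℝ → ℕ)
    (hf : MonotoneOn f (Set.Icc (0:ℝ) 1))
    (hfnc : ¬ ∀ x ∈ Set.Ioo (0:ℝ) 1, ∀ y ∈ Set.Ioo (0:ℝ) 1, f x = f y)
    (hrep : ∀ X ∈ L, f (ρ₁ X) = f (ρ₂ X))
    (X : Ω → ℝ) (hX : X ∈ L) (hlt : ρ₁ X < ρ₂ X) : False := by
  push_neg at hfnc
  obtain ⟨u₀, hu₀, v₀, hv₀, hne₀⟩ := hfnc
  -- get u < v in (0,1) with f u ≠ f v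
  obtain ⟨u, v, hu, hv, huv, hne⟩ :
      ∃ u v : ℝ, u ∈ Set.Ioo (0:ℝ) 1 ∧ v ∈ Set.Ioo (0:ℝ) 1 ∧ u < v ∧ f u ≠ f v := by
    rcases lt_trichotomy u₀ v₀ with h | h | h
    · exact ⟨u₀, v₀, hu₀, hv₀, h, hne₀⟩
    · exact absurd (h ▸ rfl) hne₀
    · exact ⟨v₀, u₀, hv₀, hu₀, h, fun hh => hne₀ hh.symm⟩
  set r₁ := ρ₁ X with hr₁
  set r₂ := ρ₂ X with hr₂
  have hr₁m := hρ₁val X hX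
  have hr₂m := hρ₂val X hX
  have hrpos : 0 < r₂ - r₁ := by linarith
  set m := min u (1 - v) with hm
  have hmpos : 0 < m := lt_min hu.1 (by linarith [hv.2])
  set δ := m * (r₂ - r₁) with hδdef
  have hδpos : 0 < δ := mul_pos hmpos hrpos
  obtain ⟨x, y, hxI, hyI, hxy, hclose, hfxy⟩ :=
    find_close f hf u v hu.1 hv.2 huv (le_of_lt hu.2) (le_of_lt hv.1) hne δ hδpos
  set l := (y - x) / (r₂ - r₁) with hl
  have hlpos : 0 < l := div_pos (by linarith) hrpos
  have hlm : l < m := by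
    rw [hl, div_lt_iff₀ hrpos]
    calc y - x < δ := hclose
    _ = m * (r₂ - r₁) := hδdef
  set a := x - l * r₁ with ha
  have hx0 : 0 < x := lt_of_lt_of_le hu.1 hxI.1
  have hyv1 : y < 1 := lt_of_le_of_lt hyI.2 hv.2
  have ha0 : 0 ≤ a := by
    have : l * r₁ ≤ l * 1 := mul_le_mul_of_nonneg_left hr₁m.2 (le_of_lt hlpos)
    have hmu : m ≤ u := min_le_left _ _
    have : l * r₁ ≤ u := by linarith
    have := hxI.1
    simp only [ha]
    linarith
  have hla1 : l + a ≤ 1 := by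
    have hm1v : m ≤ 1 - v := min_le_right _ _
    have : l * (1 - r₁) ≤ l := by nlinarith [hr₁m.1, hlpos]
    have hxv : x ≤ v := hxI.2
    simp only [ha]
    nlinarith
  have hYval : ∀ ω, l * X ω + a ∈ Set.Icc (0:ℝ) 1 := by
    intro ω
    have h := hLval X hX ω
    constructor
    · nlinarith [h.1, hlpos]
    · nlinarith [h.2, hlpos]
  have hYL : (fun ω => l * X ω + a) ∈ L := hLaff X hX l hlpos a hYval
  have e₁ : ρ₁ (fun ω => l * X ω + a) = x := by
    rw [hρ₁aff X hX l hlpos a hYL, ← hr₁, ha]; ring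
  have e₂ : ρ₂ (fun ω => l * X ω + a) = y := by
    rw [hρ₂aff X hX l hlpos a hYL, ← hr₂, ha, hl]
    field_simp
    ring
  have := hrep _ hYL
  rw [e₁, e₂] at this
  exact hfxy this

theorem stmt_8 {Ω : Type*} (L : Set (Ω → ℝ))
    (hLval : ∀ X ∈ L, ∀ ω, X ω ∈ Set.Icc (0:ℝ) 1)
    (hLconst : ∀ c ∈ Set.Icc (0:ℝ) 1, (fun _ : Ω => c) ∈ L)
    (hLaff : ∀ X ∈ L, ∀ l : ℝ, 0 < l → ∀ a : ℝ,
      (∀ ω, l * X ω + a ∈ Set.Icc (0:ℝ) 1) → (fun ω => l * X ω + a) ∈ L)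
    (ρ₁ ρ₂ : (Ω → ℝ) → ℝ)
    (hρ₁val : ∀ X ∈ L, ρ₁ X ∈ Set.Icc (0:ℝ) 1)
    (hρ₂val : ∀ X ∈ L, ρ₂ X ∈ Set.Icc (0:ℝ) 1)
    (hρ₁aff : ∀ X ∈ L, ∀ l : ℝ, 0 < l → ∀ a : ℝ, (fun ω => l * X ω + a) ∈ L →
      ρ₁ (fun ω => l * X ω + a) = l * ρ₁ X + a)
    (hρ₂aff : ∀ X ∈ L, ∀ l : ℝ, 0 < l → ∀ a : ℝ, (fun ω => l * X ω + a) ∈ L →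
      ρ₂ (fun ω => l * X ω + a) = l * ρ₂ X + a)
    (hρ₁const : ∀ c ∈ Set.Icc (0:ℝ) 1, ρ₁ (fun _ : Ω => c) = c)
    (hρ₂const : ∀ c ∈ Set.Icc (0:ℝ) 1, ρ₂ (fun _ : Ω => c) = c)
    (n : ℕ) (f : ℝ → ℕ)
    (hf : MonotoneOn f (Set.Icc (0:ℝ) 1))
    (hf0 : f 0 = 1) (hf1 : f 1 = n)
    (hfnc : ¬ ∀ x ∈ Set.Ioo (0:ℝ) 1, ∀ y ∈ Set.Ioo (0:ℝ) 1, f x = f y)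
    (hrep : ∀ X ∈ L, f (ρ₁ X) = f (ρ₂ X)) :
    ∀ X ∈ L, ρ₁ X = ρ₂ X := by
  intro X hX
  rcases lt_trichotomy (ρ₁ X) (ρ₂ X) with h | h | h
  · exact absurd (stmt_8_aux L hLval hLaff ρ₁ ρ₂ hρ₁val hρ₂val hρ₁aff hρ₂aff
      f hf hfnc hrep X hX h) not_false
  · exact h
  · exact absurd (stmt_8_aux L hLval hLaff ρ₂ ρ₁ hρ₂val hρ₁val hρ₂aff hρ₁aff
      f hf hfnc (fun Y hY => (hrep Y hY).symm) X hX h) not_false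
end

section
/- Let P₁,…,P_s be probability measures on (Ω,𝓕) and g : [0,1]^s → ℝ componentwise increasing with g(0,…,0)=0 and g(1,…,1)=1. Then the set function ν(A) = g(P₁(A),…,P_s(A)) is a capacity: it is monotone, ν(∅)=0, and ν(Ω)=1. Moreover, if g satisfies the two-point inequality g(x₁)+g(x₄) ≤ g(x₂)+g(x₃) for all x₁ ≤ x₂ ≤ x₄, x₁ ≤ x₃ ≤ x₄ with x₁+x₄ = x₂+x₃, then ν is submodular: ν(A∩B) + ν(A∪B) ≤ ν(A) + ν(B) for all A, B ∈ 𝓕. -/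
/-!
Write `ν = g ∘ P^S` with `P^S(A) = (P₁(A), …, P_s(A)) ∈ [0,1]^s`. Since `P^S` is monotone,
`ν` inherits monotonicity from `g`. For submodularity, the four points
`P^S(A ∩ B) ≤ P^S(A), P^S(B) ≤ P^S(A ∪ B)` satisfy the hypothesis of the two-point inequality,
the sum condition being inclusion–exclusion `P(A ∩ B) + P(A ∪ B) = P(A) + P(B)`.
-/

open MeasureTheory Set

namespace MeasureTheory

variable {Ω ι : Type*} [MeasurableSpace Ω]

def measureVector (P : ι → Measure Ω) (A : Set Ω) : ι → ℝ := fun j => (P j).real A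

lemma measureVector_mem_Icc (P : ι → Measure Ω) [∀ j, IsZeroOrProbabilityMeasure (P j)]
    (A : Set Ω) : measureVector P A ∈ Icc 0 1 :=
  ⟨fun _ => measureReal_nonneg, fun _ => measureReal_le_one⟩

@[simp]
lemma measureVector_empty (P : ι → Measure Ω) : measureVector P ∅ = 0 :=
  funext fun _ => measureReal_empty

@[simp]
lemma measureVector_univ (P : ι → Measure Ω) [∀ j, IsProbabilityMeasure (P j)] :
    measureVector P univ = 1 :=
  funext fun _ => probReal_univ

lemma measureVector_mono (P : ι → Measure Ω) [∀ j, IsFiniteMeasure (P j)] {A B : Set Ω}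
    (hAB : A ⊆ B) : measureVector P A ≤ measureVector P B :=
  fun _ => measureReal_mono hAB

lemma measureVector_inter_add_union (P : ι → Measure Ω) [∀ j, IsFiniteMeasure (P j)]
    (A : Set Ω) {B : Set Ω} (hB : MeasurableSet B) :
    measureVector P (A ∩ B) + measureVector P (A ∪ B) = measureVector P A + measureVector P B :=
  funext fun j => (add_comm _ _).trans (measureReal_union_add_inter (μ := P j) hB)

end MeasureTheory

theorem stmt_14 {Ω : Type*} [MeasurableSpace Ω] (s : ℕ)
    (P : Fin s → Measure Ω) [∀ j, IsProbabilityMeasure (P j)]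
    (g : (Fin s → ℝ) → ℝ)
    (hmono : MonotoneOn g (Set.Icc (0 : Fin s → ℝ) 1))
    (hg0 : g 0 = 0) (hg1 : g 1 = 1)
    (ν : Set Ω → ℝ) (hν : ∀ A : Set Ω, ν A = g (fun j => ((P j) A).toReal)) :
    ((∀ A B : Set Ω, MeasurableSet A → MeasurableSet B → A ⊆ B → ν A ≤ ν B) ∧
      ν ∅ = 0 ∧ ν Set.univ = 1) ∧
    ((∀ x₁ ∈ Set.Icc (0 : Fin s → ℝ) 1, ∀ x₂ ∈ Set.Icc (0 : Fin s → ℝ) 1,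
        ∀ x₃ ∈ Set.Icc (0 : Fin s → ℝ) 1, ∀ x₄ ∈ Set.Icc (0 : Fin s → ℝ) 1,
        x₁ ≤ x₂ → x₂ ≤ x₄ → x₁ ≤ x₃ → x₃ ≤ x₄ → x₁ + x₄ = x₂ + x₃ →
        g x₁ + g x₄ ≤ g x₂ + g x₃) →
      ∀ A B : Set Ω, MeasurableSet A → MeasurableSet B →
        ν (A ∩ B) + ν (A ∪ B) ≤ ν A + ν B) := by
  have hν' : ∀ A, ν A = g (measureVector P A) := hν
  have hmem := measureVector_mem_Icc P
  refine ⟨⟨fun A B _ _ hAB => ?_, ?_, ?_⟩, fun htwo A B _ hB => ?_⟩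
  · rw [hν', hν']
    exact hmono (hmem A) (hmem B) (measureVector_mono P hAB)
  · rw [hν', measureVector_empty, hg0]
  · rw [hν', measureVector_univ, hg1]
  · simp only [hν']
    exact htwo _ (hmem _) _ (hmem _) _ (hmem _) _ (hmem _)
      (measureVector_mono P inter_subset_left) (measureVector_mono P subset_union_left)
      (measureVector_mono P inter_subset_right) (measureVector_mono P subset_union_right)
      (measureVector_inter_add_union P A hB)
end
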